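/- Let Z be a compact Hausdorff topological space, let n ≥ 1, let u₁, u₂ be unitary matrices indexed by Fin n × Fin k over ℂ, and let x, x' : Fin k → Z. Suppose that for every continuous function f : Z → M_n(ℂ) one has u₁·(Σ_{s} f(x(s)) ⊗ E_s)·u₁⋆ = u₂·(Σ_{s} f(x'(s)) ⊗ E_s)·u₂⋆. Then there exists a permutation μ of Fin k such that x(s) = x'(μ(s)) for all s ∈ Fin k. -/

import Mathlib

open Kronecker

/-- If `u₁ · (Σ_s f(x(s)) ⊗ E_s) · u₁⋆ = u₂ · (Σ_s f(x'(s)) ⊗ E_s) · u₂⋆`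
for all continuous `f : Z → M_n(ℂ)` (with `n ≥ 1` and `u₁, u₂` unitary), then
there is a permutation `μ` of `Fin k` with `x(s) = x'(μ(s))` for all `s`. -/
theorem stmt_4 (Z : Type*) [TopologicalSpace Z] [CompactSpace Z] [T2Space Z]
    (n k : ℕ) (hn : 1 ≤ n)
    (u₁ u₂ : Matrix (Fin n × Fin k) (Fin n × Fin k) ℂ)
    (hu₁ : u₁ ∈ Matrix.unitaryGroup (Fin n × Fin k) ℂ)
    (hu₂ : u₂ ∈ Matrix.unitaryGroup (Fin n × Fin k) ℂ)
    (x x' : Fin k → Z)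
    (h : ∀ f : C(Z, Matrix (Fin n) (Fin n) ℂ),
      u₁ * (∑ s, (f (x s)) ⊗ₖ Matrix.single s s (1 : ℂ)) * star u₁
        = u₂ * (∑ s, (f (x' s)) ⊗ₖ Matrix.single s s (1 : ℂ)) * star u₂) :
    ∃ μ : Equiv.Perm (Fin k), ∀ s, x s = x' (μ s) := by
  classical
  have hn' : (n : ℂ) ≠ 0 := Nat.cast_ne_zero.mpr (by omega)
  -- Step 1: trace argument gives equality of sums for all continuous scalar functions
  have key : ∀ g : C(Z, ℂ), ∑ s, g (x s) = ∑ s, g (x' s) := by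
    intro g
    have hf := h ⟨fun z => g z • (1 : Matrix (Fin n) (Fin n) ℂ),
      (map_continuous g).smul continuous_const⟩
    have htr := congrArg Matrix.trace hf
    rw [Matrix.trace_mul_cycle, hu₁.1, Matrix.one_mul] at htr
    rw [Matrix.trace_mul_cycle, hu₂.1, Matrix.one_mul] at htr
    simp only [Matrix.trace_sum, Matrix.trace_kronecker, ContinuousMap.coe_mk,
      Matrix.trace_smul, Matrix.trace_one, Matrix.trace_single_eq_same,
      Fintype.card_fin, smul_eq_mul, mul_one] at htr
    have htr' : (n : ℂ) * ∑ s, g (x s) = (n : ℂ) * ∑ s, g (x' s) := by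
      rw [Finset.mul_sum, Finset.mul_sum]
      simpa [mul_comm] using htr
    exact mul_left_cancel₀ hn' htr'
  -- Step 2: counting using Urysohn functions
  have hcount : ∀ z : Z, (Finset.univ.filter (fun s => x s = z)).card
      = (Finset.univ.filter (fun s => x' s = z)).card := by
    intro z
    set S : Set Z := (Set.range x ∪ Set.range x') \ {z} with hS
    have hSfin : S.Finite := (((Set.finite_range x).union (Set.finite_range x')).diff)
    obtain ⟨f, hf0, hf1, -⟩ := exists_continuous_zero_one_of_isClosed
      hSfin.isClosed isClosed_singleton
      (Set.disjoint_singleton_right.mpr (fun hz => hz.2 rfl))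
    have hkey := key ⟨fun w => (f w : ℂ), Complex.continuous_ofReal.comp (map_continuous f)⟩
    simp only [ContinuousMap.coe_mk] at hkey
    have hval : ∀ (y : Fin k → Z) (s : Fin k), y = x ∨ y = x' →
        ((f (y s) : ℂ)) = if y s = z then 1 else 0 := by
      intro y s hy
      by_cases hz : y s = z
      · simp [hz, hf1 rfl]
      · have : y s ∈ S := ⟨by rcases hy with rfl | rfl
                              · exact Or.inl ⟨s, rfl⟩
                              · exact Or.inr ⟨s, rfl⟩, hz⟩
        simp [hf0 this, hz]
    have h1 : ∑ s, ((f (x s) : ℂ)) = ((Finset.univ.filter (fun s => x s = z)).card : ℂ) := by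
      rw [Finset.sum_congr rfl fun s _ => hval x s (Or.inl rfl)]
      simp [Finset.sum_boole]
    have h2 : ∑ s, ((f (x' s) : ℂ)) = ((Finset.univ.filter (fun s => x' s = z)).card : ℂ) := by
      rw [Finset.sum_congr rfl fun s _ => hval x' s (Or.inr rfl)]
      simp [Finset.sum_boole]
    have := h1 ▸ h2 ▸ hkey
    exact_mod_cast this
  -- Step 3: build the permutation from fiberwise equivalences
  have hfib : ∀ z : Z, Nonempty ({ s : Fin k // x s = z } ≃ { s : Fin k // x' s = z }) := by
    intro z
    refine ⟨Fintype.equivOfCardEq ?_⟩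
    simp only [Fintype.card_subtype]
    exact hcount z
  exact ⟨Equiv.ofFiberEquiv (f := x) (g := x') fun z => (hfib z).some,
    fun s => (Equiv.ofFiberEquiv_map _ s).symm⟩
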